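/- Suppose Theorem BSS-stable holds: for every matrix X with ‖X‖² ≤ 1 and ‖X‖_F² ≤ k and ε ∈ (0,1), there is a diagonal S with O(k/ε²) nonzero entries satisfying ‖(SX)ᵀ(SX) − XᵀX‖ ≤ ε. Then for any two matrices A, B with n rows, there is a diagonal S with O(k/ε²) nonzero entries such that ‖(SA)ᵀ(SB) − AᵀB‖ ≤ 4ε·max(‖A‖, ‖A‖_F/√k)·max(‖B‖, ‖B‖_F/√k); in particular S satisfies the (k, O(ε))-AMM property for A, B. -/

import Mathlib

open Matrix MeasureTheory

noncomputable def opNorm {α β : Type} [Fintype α] [Fintype β] [DecidableEq β]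
    (A : Matrix α β ℝ) : ℝ :=
  ‖LinearMap.toContinuousLinearMap (Matrix.toEuclideanLin A)‖

noncomputable def frobNorm {α β : Type} [Fintype α] [Fintype β] (A : Matrix α β ℝ) : ℝ :=
  Real.sqrt (∑ i, ∑ j, A i j ^ 2)

lemma opNorm_nonneg {α β : Type} [Fintype α] [Fintype β] [DecidableEq β]
    (A : Matrix α β ℝ) : 0 ≤ opNorm A := norm_nonneg _

lemma euclid_norm {β : Type} [Fintype β] (v : β → ℝ) :
    ‖(WithLp.equiv 2 (β → ℝ)).symm v‖ = Real.sqrt (∑ j, v j ^ 2) := by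
  rw [EuclideanSpace.norm_eq]
  simp [Real.norm_eq_abs, sq_abs]

lemma Matrix.toEuclideanLin_piLp_equiv_symm {α β : Type} [Fintype β] [DecidableEq β]
    (A : Matrix α β ℝ) (v : β → ℝ) :
    Matrix.toEuclideanLin A ((WithLp.equiv 2 (β → ℝ)).symm v) =
      (WithLp.equiv 2 (α → ℝ)).symm (A.mulVec v) := rfl

lemma mulVec_sqsum_le {α β : Type} [Fintype α] [Fintype β] [DecidableEq β]
    (A : Matrix α β ℝ) (v : β → ℝ) :
    Real.sqrt (∑ i, (A.mulVec v i) ^ 2) ≤ opNorm A * Real.sqrt (∑ j, v j ^ 2) := by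
  have h := (LinearMap.toContinuousLinearMap (Matrix.toEuclideanLin A)).le_opNorm
    ((WithLp.equiv 2 (β → ℝ)).symm v)
  simp only [LinearMap.coe_toContinuousLinearMap', Matrix.toEuclideanLin_piLp_equiv_symm,
    euclid_norm] at h
  exact h

lemma opNorm_le_bound {α β : Type} [Fintype α] [Fintype β] [DecidableEq β]
    (A : Matrix α β ℝ) {c : ℝ} (hc : 0 ≤ c)
    (h : ∀ v : β → ℝ, Real.sqrt (∑ i, (A.mulVec v i) ^ 2) ≤ c * Real.sqrt (∑ j, v j ^ 2)) :
    opNorm A ≤ c := by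
  refine ContinuousLinearMap.opNorm_le_bound _ hc fun x => ?_
  have h2 := h (WithLp.equiv 2 (β → ℝ) x)
  rw [← euclid_norm, ← euclid_norm, (WithLp.equiv 2 (β → ℝ)).symm_apply_apply] at h2
  exact h2

lemma opNorm_smul {α β : Type} [Fintype α] [Fintype β] [DecidableEq β]
    (c : ℝ) (A : Matrix α β ℝ) : opNorm (c • A) = |c| * opNorm A := by
  unfold opNorm
  rw [_root_.map_smul, _root_.map_smul]
  rw [norm_smul c (LinearMap.toContinuousLinearMap (Matrix.toEuclideanLin A)), Real.norm_eq_abs]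

lemma opNorm_submatrix_le {α β α' β' : Type} [Fintype α] [Fintype β] [DecidableEq β]
    [Fintype α'] [Fintype β'] [DecidableEq β']
    (M : Matrix α β ℝ) (f : α' → α) (g : β' → β) (hf : Function.Injective f)
    (hg : Function.Injective g) : opNorm (M.submatrix f g) ≤ opNorm M := by
  classical
  refine opNorm_le_bound _ (opNorm_nonneg M) fun v => ?_
  set w : β → ℝ := Function.extend g v 0 with hw
  have key1 : ∀ i, (M.submatrix f g).mulVec v i = M.mulVec w (f i) := by
    intro i
    simp only [Matrix.mulVec, Matrix.submatrix_apply, dotProduct]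
    have : ∑ b, M (f i) b * w b = ∑ b ∈ Finset.univ.image g, M (f i) b * w b := by
      refine (Finset.sum_subset (Finset.subset_univ _) (fun b _ hb => ?_)).symm
      have : ¬ ∃ j, g j = b := by
        rintro ⟨j, rfl⟩; exact hb (Finset.mem_image_of_mem g (Finset.mem_univ j))
      rw [hw, Function.extend_apply' _ _ _ this, Pi.zero_apply, mul_zero]
    rw [this, Finset.sum_image (fun a _ b _ h => hg h)]
    exact Finset.sum_congr rfl fun j _ => by rw [hw, hg.extend_apply]
  have key2 : ∑ b, w b ^ 2 = ∑ j, v j ^ 2 := by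
    have : ∑ b, w b ^ 2 = ∑ b ∈ Finset.univ.image g, w b ^ 2 := by
      refine (Finset.sum_subset (Finset.subset_univ _) (fun b _ hb => ?_)).symm
      have : ¬ ∃ j, g j = b := by
        rintro ⟨j, rfl⟩; exact hb (Finset.mem_image_of_mem g (Finset.mem_univ j))
      rw [hw, Function.extend_apply' _ _ _ this, Pi.zero_apply]; ring
    rw [this, Finset.sum_image (fun a _ b _ h => hg h)]
    exact Finset.sum_congr rfl fun j _ => by rw [hw, hg.extend_apply]
  have key3 : ∑ i, ((M.submatrix f g).mulVec v i) ^ 2 ≤ ∑ a, (M.mulVec w a) ^ 2 := by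
    simp only [key1]
    have : ∑ i, (M.mulVec w (f i)) ^ 2 = ∑ a ∈ Finset.univ.image f, (M.mulVec w a) ^ 2 := by
      rw [Finset.sum_image (fun a _ b _ h => hf h)]
    rw [this]
    exact Finset.sum_le_sum_of_subset_of_nonneg (Finset.subset_univ _)
      (fun a _ _ => sq_nonneg _)
  calc Real.sqrt (∑ i, ((M.submatrix f g).mulVec v i) ^ 2)
      ≤ Real.sqrt (∑ a, (M.mulVec w a) ^ 2) := Real.sqrt_le_sqrt key3
    _ ≤ opNorm M * Real.sqrt (∑ b, w b ^ 2) := mulVec_sqsum_le M w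
    _ = opNorm M * Real.sqrt (∑ j, v j ^ 2) := by rw [key2]

lemma sqrt_sum_add_le {α : Type} [Fintype α] (x y : α → ℝ) :
    Real.sqrt (∑ i, (x i + y i) ^ 2) ≤
      Real.sqrt (∑ i, x i ^ 2) + Real.sqrt (∑ i, y i ^ 2) := by
  have h := norm_add_le ((WithLp.equiv 2 (α → ℝ)).symm x) ((WithLp.equiv 2 (α → ℝ)).symm y)
  have e : (WithLp.equiv 2 (α → ℝ)).symm x + (WithLp.equiv 2 (α → ℝ)).symm y
      = (WithLp.equiv 2 (α → ℝ)).symm (fun i => x i + y i) := rfl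
  rw [e, euclid_norm, euclid_norm, euclid_norm] at h
  exact h

lemma opNorm_fromColumns_le {α β₁ β₂ : Type} [Fintype α] [Fintype β₁] [Fintype β₂]
    [DecidableEq β₁] [DecidableEq β₂]
    (A : Matrix α β₁ ℝ) (B : Matrix α β₂ ℝ) {s : ℝ} (hA : opNorm A ≤ s) (hB : opNorm B ≤ s) :
    opNorm (Matrix.fromCols A B) ≤ s * Real.sqrt 2 := by
  have hs : 0 ≤ s := le_trans (opNorm_nonneg A) hA
  refine opNorm_le_bound _ (by positivity) fun v => ?_
  have hmv : ∀ i, (Matrix.fromCols A B).mulVec v i =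
      A.mulVec (v ∘ Sum.inl) i + B.mulVec (v ∘ Sum.inr) i := by
    intro i
    simp only [Matrix.mulVec, dotProduct, Fintype.sum_sum_type, Matrix.fromCols_apply_inl,
      Matrix.fromCols_apply_inr, Function.comp]
  set p := ∑ j, (v (Sum.inl j)) ^ 2 with hp
  set q := ∑ j, (v (Sum.inr j)) ^ 2 with hq
  have hpn : 0 ≤ p := Finset.sum_nonneg fun _ _ => sq_nonneg _
  have hqn : 0 ≤ q := Finset.sum_nonneg fun _ _ => sq_nonneg _
  have hsum : ∑ j, v j ^ 2 = p + q := Fintype.sum_sum_type _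
  calc Real.sqrt (∑ i, ((Matrix.fromCols A B).mulVec v i) ^ 2)
      = Real.sqrt (∑ i, (A.mulVec (v ∘ Sum.inl) i + B.mulVec (v ∘ Sum.inr) i) ^ 2) := by
        simp only [hmv]
    _ ≤ Real.sqrt (∑ i, (A.mulVec (v ∘ Sum.inl) i) ^ 2)
        + Real.sqrt (∑ i, (B.mulVec (v ∘ Sum.inr) i) ^ 2) := sqrt_sum_add_le _ _
    _ ≤ opNorm A * Real.sqrt p + opNorm B * Real.sqrt q := by
        exact add_le_add (mulVec_sqsum_le A _) (mulVec_sqsum_le B _)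
    _ ≤ s * Real.sqrt p + s * Real.sqrt q := by
        exact add_le_add (mul_le_mul_of_nonneg_right hA (Real.sqrt_nonneg _))
          (mul_le_mul_of_nonneg_right hB (Real.sqrt_nonneg _))
    _ = s * (Real.sqrt p + Real.sqrt q) := by ring
    _ ≤ s * (Real.sqrt 2 * Real.sqrt (p + q)) := by
        gcongr
        have h1 : Real.sqrt p + Real.sqrt q = Real.sqrt ((Real.sqrt p + Real.sqrt q) ^ 2) := by
          rw [Real.sqrt_sq (by positivity)]
        rw [h1, ← Real.sqrt_mul (by norm_num : (0:ℝ) ≤ 2)]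
        refine Real.sqrt_le_sqrt ?_
        nlinarith [Real.sq_sqrt hpn, Real.sq_sqrt hqn, sq_nonneg (Real.sqrt p - Real.sqrt q)]
    _ = s * Real.sqrt 2 * Real.sqrt (∑ j, v j ^ 2) := by rw [hsum]; ring

lemma frobNorm_nonneg {α β : Type} [Fintype α] [Fintype β] (A : Matrix α β ℝ) :
    0 ≤ frobNorm A := Real.sqrt_nonneg _

lemma frob_sq {α β : Type} [Fintype α] [Fintype β] (A : Matrix α β ℝ) :
    frobNorm A ^ 2 = ∑ i, ∑ j, A i j ^ 2 :=
  Real.sq_sqrt (Finset.sum_nonneg fun _ _ => Finset.sum_nonneg fun _ _ => sq_nonneg _)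

lemma frobNorm_pos {α β : Type} [Fintype α] [Fintype β] {A : Matrix α β ℝ} (h : A ≠ 0) :
    0 < frobNorm A := by
  rw [frobNorm, Real.sqrt_pos]
  by_contra hc
  push_neg at hc
  have hz : ∑ i, ∑ j, A i j ^ 2 = 0 :=
    le_antisymm hc (Finset.sum_nonneg fun _ _ => Finset.sum_nonneg fun _ _ => sq_nonneg _)
  apply h
  ext i j
  have h1 := (Finset.sum_eq_zero_iff_of_nonneg
    (fun i _ => Finset.sum_nonneg fun j _ => sq_nonneg (A i j))).1 hz i (Finset.mem_univ i)
  have h2 := (Finset.sum_eq_zero_iff_of_nonneg (fun j _ => sq_nonneg (A i j))).1 h1 j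
    (Finset.mem_univ j)
  simpa using pow_eq_zero_iff (n := 2) (by norm_num) |>.1 h2

lemma opNorm_zero {α β : Type} [Fintype α] [Fintype β] [DecidableEq β] :
    opNorm (0 : Matrix α β ℝ) = 0 := by
  unfold opNorm
  rw [map_zero, map_zero, norm_zero]

set_option maxHeartbeats 1000000 in
theorem stmt17 {n : ℕ} (k : ℝ) (hk : 0 < k) (C : ℝ)
    (hBSS : ∀ (dX : ℕ) (X : Matrix (Fin n) (Fin dX) ℝ),
      opNorm X ^ 2 ≤ 1 → frobNorm X ^ 2 ≤ k →
      ∀ ε : ℝ, 0 < ε → ε < 1 →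
        ∃ dv : Fin n → ℝ,
          ((Finset.univ.filter fun i => dv i ≠ 0).card : ℝ) ≤ C * k / ε ^ 2 ∧
          opNorm ((Matrix.diagonal dv * X)ᵀ * (Matrix.diagonal dv * X) - Xᵀ * X) ≤ ε) :
    ∃ C' : ℝ, ∀ (dA dB : ℕ) (A : Matrix (Fin n) (Fin dA) ℝ) (B : Matrix (Fin n) (Fin dB) ℝ)
        (ε : ℝ), 0 < ε → ε < 1 →
      ∃ dv : Fin n → ℝ,
        ((Finset.univ.filter fun i => dv i ≠ 0).card : ℝ) ≤ C' * k / ε ^ 2 ∧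
        opNorm ((Matrix.diagonal dv * A)ᵀ * (Matrix.diagonal dv * B) - Aᵀ * B) ≤
          4 * ε * max (opNorm A) (frobNorm A / Real.sqrt k) *
            max (opNorm B) (frobNorm B / Real.sqrt k) := by
  refine ⟨max C 0, fun dA dB A B ε hε hε1 => ?_⟩
  have hε2 : (0:ℝ) < ε ^ 2 := by positivity
  have hsk : 0 < Real.sqrt k := Real.sqrt_pos.2 hk
  have hRHS0 : ∀ {dA' dB' : ℕ} (A' : Matrix (Fin n) (Fin dA') ℝ)
      (B' : Matrix (Fin n) (Fin dB') ℝ), 0 ≤ 4 * ε * max (opNorm A') (frobNorm A' / Real.sqrt k) *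
        max (opNorm B') (frobNorm B' / Real.sqrt k) := by
    intro _ _ A' B'
    have h1 : 0 ≤ max (opNorm A') (frobNorm A' / Real.sqrt k) :=
      le_trans (opNorm_nonneg A') (le_max_left _ _)
    have h2 : 0 ≤ max (opNorm B') (frobNorm B' / Real.sqrt k) :=
      le_trans (opNorm_nonneg B') (le_max_left _ _)
    positivity
  by_cases hA0 : A = 0
  · refine ⟨0, by simp; positivity, ?_⟩
    subst hA0
    simp only [Matrix.mul_zero, Matrix.transpose_zero, Matrix.zero_mul, sub_zero, sub_self]
    rw [opNorm_zero]
    exact hRHS0 0 B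
  by_cases hB0 : B = 0
  · refine ⟨0, by simp; positivity, ?_⟩
    subst hB0
    simp only [Matrix.mul_zero, Matrix.transpose_zero, Matrix.zero_mul, sub_zero, sub_self]
    rw [opNorm_zero]
    exact hRHS0 A 0
  -- main case
  set mA := max (opNorm A) (frobNorm A / Real.sqrt k) with hmAdef
  set mB := max (opNorm B) (frobNorm B / Real.sqrt k) with hmBdef
  have hmA : 0 < mA := lt_of_lt_of_le (div_pos (frobNorm_pos hA0) hsk) (le_max_right _ _)
  have hmB : 0 < mB := lt_of_lt_of_le (div_pos (frobNorm_pos hB0) hsk) (le_max_right _ _)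
  have hs2 : (0:ℝ) < Real.sqrt 2 := Real.sqrt_pos.2 (by norm_num)
  set a := Real.sqrt 2 * mA with hadef
  set b := Real.sqrt 2 * mB with hbdef
  have ha : 0 < a := by positivity
  have hb : 0 < b := by positivity
  set e := finSumFinEquiv (m := dA) (n := dB) with hedef
  set X' : Matrix (Fin n) (Fin dA ⊕ Fin dB) ℝ :=
    Matrix.fromCols (a⁻¹ • A) (b⁻¹ • B) with hX'def
  set X : Matrix (Fin n) (Fin (dA + dB)) ℝ := X'.submatrix id e.symm with hXdef
  have hXle : opNorm X ≤ 1 := by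
    have h1 : opNorm (a⁻¹ • A) ≤ (Real.sqrt 2)⁻¹ := by
      rw [opNorm_smul, abs_of_pos (inv_pos.2 ha)]
      have : opNorm A ≤ mA := le_max_left _ _
      calc a⁻¹ * opNorm A ≤ a⁻¹ * mA := by
            exact mul_le_mul_of_nonneg_left this (inv_pos.2 ha).le
        _ = (Real.sqrt 2)⁻¹ := by rw [hadef]; field_simp
    have h2 : opNorm (b⁻¹ • B) ≤ (Real.sqrt 2)⁻¹ := by
      rw [opNorm_smul, abs_of_pos (inv_pos.2 hb)]
      have : opNorm B ≤ mB := le_max_left _ _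
      calc b⁻¹ * opNorm B ≤ b⁻¹ * mB := by
            exact mul_le_mul_of_nonneg_left this (inv_pos.2 hb).le
        _ = (Real.sqrt 2)⁻¹ := by rw [hbdef]; field_simp
    calc opNorm X ≤ opNorm X' :=
          opNorm_submatrix_le X' id e.symm Function.injective_id e.symm.injective
      _ ≤ (Real.sqrt 2)⁻¹ * Real.sqrt 2 := opNorm_fromColumns_le _ _ h1 h2
      _ = 1 := inv_mul_cancel₀ hs2.ne'
  have h1 : opNorm X ^ 2 ≤ 1 := by
    have := opNorm_nonneg X
    nlinarith
  have h2 : frobNorm X ^ 2 ≤ k := by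
    rw [frob_sq]
    have hcol : ∀ i, ∑ j, X i j ^ 2 = ∑ c, X' i c ^ 2 := by
      intro i
      refine (Fintype.sum_equiv e (fun c => X' i c ^ 2) (fun j => X i j ^ 2) fun c => ?_).symm
      simp [hXdef]
    have hfa : frobNorm A ^ 2 ≤ mA ^ 2 * k := by
      have h3 : frobNorm A / Real.sqrt k ≤ mA := le_max_right _ _
      have h4 : frobNorm A ≤ mA * Real.sqrt k := (div_le_iff₀ hsk).1 h3
      have h5 := frobNorm_nonneg A
      nlinarith [Real.sq_sqrt hk.le]
    have hfb : frobNorm B ^ 2 ≤ mB ^ 2 * k := by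
      have h3 : frobNorm B / Real.sqrt k ≤ mB := le_max_right _ _
      have h4 : frobNorm B ≤ mB * Real.sqrt k := (div_le_iff₀ hsk).1 h3
      have h5 := frobNorm_nonneg B
      nlinarith [Real.sq_sqrt hk.le]
    calc ∑ i, ∑ j, X i j ^ 2 = ∑ i, ∑ c, X' i c ^ 2 := by simp only [hcol]
      _ = ∑ i, ((∑ j, (a⁻¹ * A i j) ^ 2) + ∑ j, (b⁻¹ * B i j) ^ 2) := by
          refine Finset.sum_congr rfl fun i _ => ?_
          rw [Fintype.sum_sum_type]
          simp [hX'def]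
      _ = a⁻¹ ^ 2 * (∑ i, ∑ j, A i j ^ 2) + b⁻¹ ^ 2 * (∑ i, ∑ j, B i j ^ 2) := by
          rw [Finset.sum_add_distrib, Finset.mul_sum, Finset.mul_sum]
          congr 1 <;> refine Finset.sum_congr rfl fun i _ => ?_ <;>
            rw [Finset.mul_sum] <;> exact Finset.sum_congr rfl fun j _ => by ring
      _ ≤ a⁻¹ ^ 2 * (mA ^ 2 * k) + b⁻¹ ^ 2 * (mB ^ 2 * k) := by
          rw [← frob_sq, ← frob_sq]
          exact add_le_add (mul_le_mul_of_nonneg_left hfa (by positivity))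
            (mul_le_mul_of_nonneg_left hfb (by positivity))
      _ = k := by
          have hA2 : a ^ 2 = 2 * mA ^ 2 := by
            rw [hadef, mul_pow, Real.sq_sqrt (by norm_num : (0:ℝ) ≤ 2)]
          have hB2 : b ^ 2 = 2 * mB ^ 2 := by
            rw [hbdef, mul_pow, Real.sq_sqrt (by norm_num : (0:ℝ) ≤ 2)]
          have e1 : a⁻¹ ^ 2 * (mA ^ 2 * k) = k / 2 := by
            rw [inv_pow, hA2]
            field_simp
            try ring
          have e2 : b⁻¹ ^ 2 * (mB ^ 2 * k) = k / 2 := by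
            rw [inv_pow, hB2]
            field_simp
            try ring
          linarith [e1, e2]
  obtain ⟨dv, hcard, hop⟩ := hBSS (dA + dB) X h1 h2 ε hε hε1
  refine ⟨dv, le_trans hcard ?_, ?_⟩
  · have : C ≤ max C 0 := le_max_left _ _
    have hk' := hk.le
    gcongr
  · set M := (Matrix.diagonal dv * X)ᵀ * (Matrix.diagonal dv * X) - Xᵀ * X with hMdef
    have hDX' : Matrix.diagonal dv * X' = Matrix.of (fun r c => dv r * X' r c) := by
      ext r c
      simp [Matrix.diagonal_mul]
    set M' : Matrix (Fin dA ⊕ Fin dB) (Fin dA ⊕ Fin dB) ℝ :=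
      (Matrix.diagonal dv * X')ᵀ * (Matrix.diagonal dv * X') - X'ᵀ * X' with hM'def
    have hDX : Matrix.diagonal dv * X = (Matrix.diagonal dv * X').submatrix id ⇑e.symm := by
      ext r c
      simp [hXdef, Matrix.diagonal_mul]
    have hMM : M = M'.submatrix ⇑e.symm ⇑e.symm := by
      rw [hMdef, hM'def, hDX, hXdef]
      ext p q
      simp [Matrix.mul_apply]
    have hsub : M.submatrix (⇑e ∘ Sum.inl) (⇑e ∘ Sum.inr) =
        (a⁻¹ * b⁻¹) • ((Matrix.diagonal dv * A)ᵀ * (Matrix.diagonal dv * B) - Aᵀ * B) := by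
      rw [hMM, Matrix.submatrix_submatrix]
      have hcomp1 : (⇑e.symm ∘ (⇑e ∘ Sum.inl)) = (Sum.inl : Fin dA → Fin dA ⊕ Fin dB) := by
        funext x; simp
      have hcomp2 : (⇑e.symm ∘ (⇑e ∘ Sum.inr)) = (Sum.inr : Fin dB → Fin dA ⊕ Fin dB) := by
        funext x; simp
      have hDA : Matrix.diagonal dv * A = Matrix.of (fun r c => dv r * A r c) := by
        ext r c; simp [Matrix.diagonal_mul]
      have hDB : Matrix.diagonal dv * B = Matrix.of (fun r c => dv r * B r c) := by
        ext r c; simp [Matrix.diagonal_mul]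
      rw [hcomp1, hcomp2, hM'def, hDX', hDA, hDB]
      ext i j
      simp only [Matrix.submatrix_apply, Matrix.sub_apply, Matrix.mul_apply,
        Matrix.transpose_apply, Matrix.of_apply, hX'def, Matrix.fromCols_apply_inl,
        Matrix.fromCols_apply_inr, Matrix.smul_apply, smul_eq_mul]
      rw [mul_sub, Finset.mul_sum, Finset.mul_sum]
      congr 1 <;> exact Finset.sum_congr rfl fun r _ => by ring
    have hL : (Matrix.diagonal dv * A)ᵀ * (Matrix.diagonal dv * B) - Aᵀ * B =
        (a * b) • (M.submatrix (⇑e ∘ Sum.inl) (⇑e ∘ Sum.inr)) := by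
      rw [hsub, smul_smul]
      have : a * b * (a⁻¹ * b⁻¹) = 1 := by field_simp
      rw [this, one_smul]
    rw [hL, opNorm_smul, abs_of_pos (by positivity : (0:ℝ) < a * b)]
    have hM1 : opNorm (M.submatrix (⇑e ∘ Sum.inl) (⇑e ∘ Sum.inr)) ≤ ε := by
      refine le_trans (opNorm_submatrix_le M _ _ ?_ ?_) hop
      · exact e.injective.comp Sum.inl_injective
      · exact e.injective.comp Sum.inr_injective
    calc a * b * opNorm (M.submatrix (⇑e ∘ Sum.inl) (⇑e ∘ Sum.inr)) ≤ a * b * ε := by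
          exact mul_le_mul_of_nonneg_left hM1 (by positivity)
      _ = 2 * mA * mB * ε := by
          rw [hadef, hbdef]
          have h2' : Real.sqrt 2 * Real.sqrt 2 = 2 := Real.mul_self_sqrt (by norm_num)
          have hre : Real.sqrt 2 * mA * (Real.sqrt 2 * mB) * ε
              = (Real.sqrt 2 * Real.sqrt 2) * (mA * mB * ε) := by ring
          rw [hre, h2']
          ring
      _ ≤ 4 * ε * mA * mB := by nlinarith [mul_pos (mul_pos hε hmA) hmB]
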